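/- Let c ∈ [2.4048, 2.4049] satisfy J₀(c) = 0. Then c·J₁(c) > 0 and 1/(c·J₁(c)) ≤ 0.801. -/

import Mathlib

set_option maxHeartbeats 2000000


/-- The Bessel function of the first kind of integer order `ν ≥ 0`, defined by its
everywhere-convergent power series. -/
noncomputable def besselJ (ν : ℕ) (x : ℝ) : ℝ :=
  ∑' k : ℕ, (-1 : ℝ) ^ k * (x / 2) ^ (2 * k + ν) /
    ((Nat.factorial k : ℝ) * (Nat.factorial (k + ν) : ℝ))

lemma besselJ_fact_ge (m : ℕ) (hm : 8 ≤ m) :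
    ∀ k : ℕ, Nat.factorial m * 9 ^ k ≤ Nat.factorial (k + m) := by
  intro k
  induction k with
  | zero => simp
  | succ n ih =>
      have h1 : Nat.factorial (n + 1 + m) = (n + m + 1) * Nat.factorial (n + m) := by
        rw [show n + 1 + m = n + m + 1 by ring, Nat.factorial_succ]
      rw [h1, pow_succ, ← mul_assoc]
      calc Nat.factorial m * 9 ^ n * 9 = 9 * (Nat.factorial m * 9 ^ n) := by ring
        _ ≤ 9 * Nat.factorial (n + m) := Nat.mul_le_mul_left 9 ih
        _ ≤ (n + m + 1) * Nat.factorial (n + m) :=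
            Nat.mul_le_mul_right _ (by omega)

set_option maxHeartbeats 1000000 in
lemma besselJ_summable_abs (ν : ℕ) (x : ℝ) (hx : 0 ≤ x) :
    Summable (fun k : ℕ => |(-1 : ℝ) ^ k * (x / 2) ^ (2 * k + ν) /
      ((Nat.factorial k : ℝ) * (Nat.factorial (k + ν) : ℝ))|) := by
  have hx2 : (0:ℝ) ≤ x / 2 := by linarith
  have hg : Summable (fun k : ℕ => (x / 2) ^ ν * (((x / 2) ^ 2) ^ k / (Nat.factorial k : ℝ))) :=
    (Real.summable_pow_div_factorial ((x / 2) ^ 2)).mul_left _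
  refine Summable.of_nonneg_of_le (fun k => abs_nonneg _) (fun k => ?_) hg
  have hfk : (0:ℝ) < (Nat.factorial k : ℝ) := by exact_mod_cast Nat.factorial_pos k
  have hfkv : (1:ℝ) ≤ (Nat.factorial (k + ν) : ℝ) := by
    exact_mod_cast Nat.one_le_iff_ne_zero.mpr (Nat.factorial_pos (k + ν)).ne'
  have hnum : (x / 2) ^ (2 * k + ν) = (x / 2) ^ ν * ((x / 2) ^ 2) ^ k := by
    rw [← pow_mul, ← pow_add]; ring_nf
  rw [abs_div, abs_mul, abs_pow, abs_pow, abs_neg, abs_one, one_pow, one_mul,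
    abs_of_nonneg hx2, abs_of_nonneg (by positivity :
      (0:ℝ) ≤ (Nat.factorial k : ℝ) * (Nat.factorial (k + ν) : ℝ)), hnum]
  calc (x / 2) ^ ν * ((x / 2) ^ 2) ^ k / ((Nat.factorial k : ℝ) * (Nat.factorial (k + ν) : ℝ))
      ≤ (x / 2) ^ ν * ((x / 2) ^ 2) ^ k / ((Nat.factorial k : ℝ) * 1) := by
        gcongr
    _ = (x / 2) ^ ν * (((x / 2) ^ 2) ^ k / (Nat.factorial k : ℝ)) := by
        rw [mul_one, mul_div_assoc]

lemma besselJ_tail_bound (c : ℝ) (h1 : (2.4048:ℝ) ≤ c) (h2 : c ≤ 2.4049) :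
    |∑' k : ℕ, (-1 : ℝ) ^ (k + 8) * (c / 2) ^ (2 * (k + 8) + 1) /
      ((Nat.factorial (k + 8) : ℝ) * (Nat.factorial ((k + 8) + 1) : ℝ))| ≤ 2e-9 := by
  have hx : (0:ℝ) ≤ c := by linarith
  have hx2 : (0:ℝ) ≤ c / 2 := by linarith
  have hx2u : c / 2 ≤ 1.20245 := by linarith
  have habs0 := besselJ_summable_abs 1 c hx
  have habs : Summable (fun k : ℕ => |(-1 : ℝ) ^ (k + 8) * (c / 2) ^ (2 * (k + 8) + 1) /
      ((Nat.factorial (k + 8) : ℝ) * (Nat.factorial ((k + 8) + 1) : ℝ))|) := by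
    exact (summable_nat_add_iff 8).mpr habs0
  have hgeom : Summable (fun k : ℕ => (23 / 14631321600 : ℝ) * (1 / 50) ^ k) :=
    (summable_geometric_of_lt_one (by norm_num) (by norm_num)).mul_left _
  have hterm : ∀ k : ℕ, |(-1 : ℝ) ^ (k + 8) * (c / 2) ^ (2 * (k + 8) + 1) /
      ((Nat.factorial (k + 8) : ℝ) * (Nat.factorial ((k + 8) + 1) : ℝ))| ≤
      (23 / 14631321600 : ℝ) * (1 / 50) ^ k := by
    intro k
    have hfpos : (0:ℝ) < (Nat.factorial (k + 8) : ℝ) * (Nat.factorial ((k + 8) + 1) : ℝ) := by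
      have := Nat.factorial_pos (k + 8); have := Nat.factorial_pos ((k + 8) + 1); positivity
    have hub : (c / 2) ^ (2 * (k + 8) + 1) = (c / 2) ^ 17 * ((c / 2) ^ 2) ^ k := by
      rw [← pow_mul, ← pow_add]; ring_nf
    have hnum17 : (c / 2) ^ 17 ≤ 23 := by
      calc (c / 2) ^ 17 ≤ (1.20245:ℝ) ^ 17 := pow_le_pow_left₀ hx2 hx2u 17
        _ ≤ 23 := by norm_num
    have hnum2 : (c / 2) ^ 2 ≤ 81 / 50 := by nlinarith
    have hnumk : ((c / 2) ^ 2) ^ k ≤ (81 / 50 : ℝ) ^ k :=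
      pow_le_pow_left₀ (by positivity) hnum2 k
    have hden : (14631321600 : ℝ) * 81 ^ k ≤
        (Nat.factorial (k + 8) : ℝ) * (Nat.factorial ((k + 8) + 1) : ℝ) := by
      have hA := besselJ_fact_ge 8 (le_refl 8) k
      have hB := besselJ_fact_ge 9 (by norm_num) k
      have hnat : 14631321600 * 81 ^ k ≤ Nat.factorial (k + 8) * Nat.factorial (k + 9) := by
        calc 14631321600 * 81 ^ k
            = (Nat.factorial 8 * 9 ^ k) * (Nat.factorial 9 * 9 ^ k) := by
              rw [show (81:ℕ) ^ k = 9 ^ k * 9 ^ k by rw [← mul_pow]; norm_num]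
              simp [Nat.factorial]; ring
          _ ≤ Nat.factorial (k + 8) * Nat.factorial (k + 9) := Nat.mul_le_mul hA hB
      calc (14631321600 : ℝ) * 81 ^ k = ((14631321600 * 81 ^ k : ℕ) : ℝ) := by push_cast; ring
        _ ≤ ((Nat.factorial (k + 8) * Nat.factorial (k + 9) : ℕ) : ℝ) := by exact_mod_cast hnat
        _ = (Nat.factorial (k + 8) : ℝ) * (Nat.factorial ((k + 8) + 1) : ℝ) := by push_cast; ring
    have habsval : |(-1 : ℝ) ^ (k + 8) * (c / 2) ^ (2 * (k + 8) + 1) /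
        ((Nat.factorial (k + 8) : ℝ) * (Nat.factorial ((k + 8) + 1) : ℝ))| =
        (c / 2) ^ (2 * (k + 8) + 1) /
        ((Nat.factorial (k + 8) : ℝ) * (Nat.factorial ((k + 8) + 1) : ℝ)) := by
      rw [abs_div, abs_mul, abs_pow, abs_neg, abs_one, one_pow, one_mul, abs_pow,
        abs_of_nonneg hx2, abs_of_nonneg hfpos.le]
    rw [habsval, hub]
    calc (c / 2) ^ 17 * ((c / 2) ^ 2) ^ k /
          ((Nat.factorial (k + 8) : ℝ) * (Nat.factorial ((k + 8) + 1) : ℝ))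
        ≤ 23 * (81 / 50 : ℝ) ^ k / ((14631321600 : ℝ) * 81 ^ k) := by
          apply div_le_div₀ (by positivity)
            (mul_le_mul hnum17 hnumk (by positivity) (by norm_num)) (by positivity) hden
      _ = (23 / 14631321600 : ℝ) * (1 / 50) ^ k := by
          have h81 : (81:ℝ) ^ k ≠ 0 := by positivity
          rw [show (81 / 50 : ℝ) ^ k = 81 ^ k * (1 / 50) ^ k by rw [← mul_pow]; norm_num]
          field_simp
  calc |∑' k : ℕ, (-1 : ℝ) ^ (k + 8) * (c / 2) ^ (2 * (k + 8) + 1) /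
        ((Nat.factorial (k + 8) : ℝ) * (Nat.factorial ((k + 8) + 1) : ℝ))|
      ≤ ∑' k : ℕ, |(-1 : ℝ) ^ (k + 8) * (c / 2) ^ (2 * (k + 8) + 1) /
        ((Nat.factorial (k + 8) : ℝ) * (Nat.factorial ((k + 8) + 1) : ℝ))| := by
        have h' : Summable fun k : ℕ => ‖(-1 : ℝ) ^ (k + 8) * (c / 2) ^ (2 * (k + 8) + 1) /
            ((Nat.factorial (k + 8) : ℝ) * (Nat.factorial ((k + 8) + 1) : ℝ))‖ := by
          simpa only [Real.norm_eq_abs] using habs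
        simpa only [Real.norm_eq_abs] using norm_tsum_le_tsum_norm h'
    _ ≤ ∑' k : ℕ, (23 / 14631321600 : ℝ) * (1 / 50) ^ k := Summable.tsum_le_tsum hterm habs hgeom
    _ = (23 / 14631321600 : ℝ) * (1 - 1 / 50)⁻¹ := by
        rw [tsum_mul_left, tsum_geometric_of_lt_one (by norm_num) (by norm_num)]
    _ ≤ 2e-9 := by norm_num

/-- Let `c ∈ [2.4048, 2.4049]` with `J₀(c) = 0`. Then `c·J₁(c) > 0` and
`1/(c·J₁(c)) ≤ 0.801`. -/
theorem besselJ_a0_bound (c : ℝ) (hc : c ∈ Set.Icc (2.4048 : ℝ) 2.4049)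
    (hzero : besselJ 0 c = 0) :
    0 < c * besselJ 1 c ∧ 1 / (c * besselJ 1 c) ≤ 0.801 := by
  obtain ⟨h1, h2⟩ := hc
  have hx : (0:ℝ) ≤ c := by linarith
  set f : ℕ → ℝ := fun k => (-1 : ℝ) ^ k * (c / 2) ^ (2 * k + 1) /
      ((Nat.factorial k : ℝ) * (Nat.factorial (k + 1) : ℝ)) with hf
  have hsum : Summable f := (besselJ_summable_abs 1 c hx).of_abs
  have hsplit : (∑ i ∈ Finset.range 8, f i) + ∑' k : ℕ, f (k + 8) = ∑' k : ℕ, f k :=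
    hsum.sum_add_tsum_nat_add 8
  have hB : besselJ 1 c = ∑' k : ℕ, f k := rfl
  have hS : ∑ i ∈ Finset.range 8, f i =
      (c/2) - (c/2)^3/2 + (c/2)^5/12 - (c/2)^7/144 + (c/2)^9/2880 - (c/2)^11/86400
        + (c/2)^13/3628800 - (c/2)^15/203212800 := by
    simp only [hf, Finset.sum_range_succ, Finset.sum_range_zero]
    norm_num [Nat.factorial]
    ring
  -- u := (c/2)^2
  set u : ℝ := (c / 2) ^ 2 with hu_def
  have hl : (1.44576576:ℝ) ≤ u := by
    have : (1.2024:ℝ) ≤ c / 2 := by linarith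
    calc (1.44576576:ℝ) = 1.2024 ^ 2 := by norm_num
      _ ≤ (c / 2) ^ 2 := pow_le_pow_left₀ (by norm_num) this 2
  have hh : u ≤ 1.4458860025 := by
    have h' : c / 2 ≤ 1.20245 := by linarith
    calc u = (c / 2) ^ 2 := hu_def
      _ ≤ (1.20245:ℝ) ^ 2 := pow_le_pow_left₀ (by linarith) h' 2
      _ = 1.4458860025 := by norm_num
  have h0u : (0:ℝ) ≤ u := by linarith
  have hup : ∀ j : ℕ, u ^ j ≤ (1.4458860025:ℝ) ^ j := fun j => pow_le_pow_left₀ h0u hh j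
  have hlo : ∀ j : ℕ, (1.44576576:ℝ) ^ j ≤ u ^ j := fun j => pow_le_pow_left₀ (by norm_num) hl j
  have p2l : (2.090238632788:ℝ) ≤ u ^ 2 := le_trans (by norm_num) (hlo 2)
  have p2u : u ^ 2 ≤ (2.090586332226:ℝ) := le_trans (hup 2) (by norm_num)
  have p3l : (3.021995445514:ℝ) ≤ u ^ 3 := le_trans (by norm_num) (hlo 3)
  have p3u : u ^ 3 ≤ (3.022749514783:ℝ) := le_trans (hup 3) (by norm_num)
  have p4l : (4.369097542001:ℝ) ≤ u ^ 4 := le_trans (by norm_num) (hlo 4)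
  have p4u : u ^ 4 ≤ (4.370551212488:ℝ) := le_trans (hup 4) (by norm_num)
  have p5l : (6.316691628325:ℝ) ≤ u ^ 5 := le_trans (by norm_num) (hlo 5)
  have p5u : u ^ 5 ≤ (6.319318821346:ℝ) := le_trans (hup 5) (by norm_num)
  have p6l : (9.132456472711:ℝ) ≤ u ^ 6 := le_trans (by norm_num) (hlo 6)
  have p6u : u ^ 6 ≤ (9.137014629119:ℝ) := le_trans (hup 6) (by norm_num)
  have p7l : (13.203392872936:ℝ) ≤ u ^ 7 := le_trans (by norm_num) (hlo 7)
  have p7u : u ^ 7 ≤ (13.21108155688:ℝ) := le_trans (hup 7) (by norm_num)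
  -- the divided-difference polynomial E(u) of P at u0 = 1.44579646
  have hEu : (68545394415795549692845179180023300488561000208872576734629153
        / 79380000000000000000000000000000000000000000000000000000000000 : ℝ)
      + (-1247957206703970630930370666697810278376791706781844289
        / 1587600000000000000000000000000000000000000000000000000 : ℝ) * u
      + (4698348663767365553926302092373219970717154657
        / 31752000000000000000000000000000000000000000000 : ℝ) * u ^ 2
      + (-8212101117367993086297886047207226241
        / 635040000000000000000000000000000000000 : ℝ) * u ^ 3
      + (8409190359091167143985315233
        / 12700800000000000000000000000000 : ℝ) * u ^ 4
      + (-5682814314109371329 / 254016000000000000000000 : ℝ) * u ^ 5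
      + (2727710177 / 5080320000000000 : ℝ) * u ^ 6
      + (-1 / 101606400 : ℝ) * u ^ 7 ≤ 0.0001 := by
    linarith
  have hEl : (-0.0001:ℝ) ≤ (68545394415795549692845179180023300488561000208872576734629153
        / 79380000000000000000000000000000000000000000000000000000000000 : ℝ)
      + (-1247957206703970630930370666697810278376791706781844289
        / 1587600000000000000000000000000000000000000000000000000 : ℝ) * u
      + (4698348663767365553926302092373219970717154657
        / 31752000000000000000000000000000000000000000000 : ℝ) * u ^ 2
      + (-8212101117367993086297886047207226241
        / 635040000000000000000000000000000000000 : ℝ) * u ^ 3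
      + (8409190359091167143985315233
        / 12700800000000000000000000000000 : ℝ) * u ^ 4
      + (-5682814314109371329 / 254016000000000000000000 : ℝ) * u ^ 5
      + (2727710177 / 5080320000000000 : ℝ) * u ^ 6
      + (-1 / 101606400 : ℝ) * u ^ 7 := by
    linarith
  have hdul : (-0.00009:ℝ) ≤ u - 1.44579646 := by linarith
  have hduu : u - 1.44579646 ≤ (0.00009:ℝ) := by linarith
  -- key polynomial lower bound
  have hPlow : (1.2484591:ℝ) ≤ 2*u - u^2 + u^3/6 - u^4/72 + u^5/1440 - u^6/43200
      + u^7/1814400 - u^8/101606400 := by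
    have hiden : 2*u - u^2 + u^3/6 - u^4/72 + u^5/1440 - u^6/43200
        + u^7/1814400 - u^8/101606400 =
        (4955134429783048691483482369327169528193888229802361601700259441009919
          / 3969000000000000000000000000000000000000000000000000000000000000000000 : ℝ)
        + (u - 1.44579646) *
          ((68545394415795549692845179180023300488561000208872576734629153
            / 79380000000000000000000000000000000000000000000000000000000000 : ℝ)
          + (-1247957206703970630930370666697810278376791706781844289
            / 1587600000000000000000000000000000000000000000000000000 : ℝ) * u
          + (4698348663767365553926302092373219970717154657
            / 31752000000000000000000000000000000000000000000 : ℝ) * u ^ 2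
          + (-8212101117367993086297886047207226241
            / 635040000000000000000000000000000000000 : ℝ) * u ^ 3
          + (8409190359091167143985315233
            / 12700800000000000000000000000000 : ℝ) * u ^ 4
          + (-5682814314109371329 / 254016000000000000000000 : ℝ) * u ^ 5
          + (2727710177 / 5080320000000000 : ℝ) * u ^ 6
          + (-1 / 101606400 : ℝ) * u ^ 7) := by
      ring
    rw [hiden]
    have habsd : |u - 1.44579646| ≤ 0.00009 := abs_le.mpr ⟨by linarith, by linarith⟩
    have habsE := abs_le.mpr ⟨hEl, hEu⟩
    have hprod := (abs_mul (u - 1.44579646) _) ▸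
      mul_le_mul habsd habsE (abs_nonneg _) (by norm_num : (0:ℝ) ≤ 0.00009)
    have hprod' := (abs_le.1 hprod).1
    linarith
  -- assemble
  have hT := besselJ_tail_bound c h1 h2
  have hfull : c * besselJ 1 c = (2*u - u^2 + u^3/6 - u^4/72 + u^5/1440 - u^6/43200
      + u^7/1814400 - u^8/101606400) + c * ∑' k : ℕ, f (k + 8) := by
    rw [hB, ← hsplit, hS, mul_add]
    have : c * ((c/2) - (c/2)^3/2 + (c/2)^5/12 - (c/2)^7/144 + (c/2)^9/2880 - (c/2)^11/86400
        + (c/2)^13/3628800 - (c/2)^15/203212800) =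
        2*u - u^2 + u^3/6 - u^4/72 + u^5/1440 - u^6/43200 + u^7/1814400 - u^8/101606400 := by
      rw [hu_def]; ring
    rw [this]
  have hTc : |c * ∑' k : ℕ, f (k + 8)| ≤ 2.4049 * 2e-9 := by
    rw [abs_mul]
    apply mul_le_mul (by rw [abs_of_nonneg hx]; exact h2) _ (abs_nonneg _) (by norm_num)
    simpa [hf] using hT
  have hTc' := abs_le.1 hTc
  have hlow : (1.248459:ℝ) ≤ c * besselJ 1 c := by
    rw [hfull]; linarith [hTc'.1, hTc'.2, hPlow]
  constructor
  · linarith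
  · rw [div_le_iff₀ (by linarith)]
    linarith
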